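/- Let d ≥ 1 and c > 0. For ε > 0 small enough, the integral ∫_{B(0;ε)} ∫_{-ε}^{ε} (h_0² + ‖h'‖⁴)^{-1} dh_0 dh' over (h_0, h') ∈ [-ε,ε] × B_{R^d}(0;ε) is infinite if d ∈ {1,2} and finite if d ≥ 3. -/

import Mathlib

open MeasureTheory Set Metric
open scoped ENNReal NNReal

private lemma lint_lt_top_of_integrableOn {f : ℝ → ℝ} {s : Set ℝ}
    (hf : IntegrableOn f s) :
    ∫⁻ x in s, ENNReal.ofReal (f x) < ⊤ := by
  refine lt_of_le_of_lt (lintegral_mono fun x => ?_) hf.2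
  rw [Real.enorm_eq_ofReal_abs]
  exact ENNReal.ofReal_le_ofReal (le_abs_self _)

private lemma lint_rpow_Ioo_top {s a : ℝ} (hs : s ≤ -1) (ha : 0 < a) :
    ∫⁻ x in Ioo (0:ℝ) a, ENNReal.ofReal (x ^ s) = ⊤ := by
  by_contra h
  have hmeas : Measurable fun x : ℝ => x ^ s := by fun_prop
  have hnn : 0 ≤ᵐ[volume.restrict (Ioo (0:ℝ) a)] fun x => x ^ s := by
    filter_upwards [ae_restrict_mem measurableSet_Ioo] with x hx
    exact Real.rpow_nonneg hx.1.le _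
  have hint : IntegrableOn (fun x : ℝ => x ^ s) (Ioo 0 a) :=
    ⟨hmeas.aestronglyMeasurable, (hasFiniteIntegral_iff_ofReal hnn).2 (lt_top_iff_ne_top.2 h)⟩
  rw [intervalIntegral.integrableOn_Ioo_rpow_iff ha] at hint
  linarith

private lemma inv_add_le_rpow {a b : ℝ} (ha : 0 < a) (hb : 0 < b) :
    (a + b)⁻¹ ≤ a ^ (-(3/8) : ℝ) * b ^ (-(5/8) : ℝ) := by
  have key : a ^ ((3:ℝ)/8) * b ^ ((5:ℝ)/8) ≤ a + b := by
    have h1 : a ^ ((3:ℝ)/8) ≤ max a b ^ ((3:ℝ)/8) :=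
      Real.rpow_le_rpow ha.le (le_max_left _ _) (by norm_num)
    have h2 : b ^ ((5:ℝ)/8) ≤ max a b ^ ((5:ℝ)/8) :=
      Real.rpow_le_rpow hb.le (le_max_right _ _) (by norm_num)
    calc a ^ ((3:ℝ)/8) * b ^ ((5:ℝ)/8)
        ≤ max a b ^ ((3:ℝ)/8) * max a b ^ ((5:ℝ)/8) :=
          mul_le_mul h1 h2 (Real.rpow_nonneg hb.le _)
            (Real.rpow_nonneg (le_max_of_le_left ha.le) _)
      _ = max a b ^ ((3:ℝ)/8 + (5:ℝ)/8) := (Real.rpow_add (lt_max_of_lt_left ha) _ _).symm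
      _ = max a b := by norm_num
      _ ≤ a + b := max_le (le_add_of_nonneg_right hb.le) (le_add_of_nonneg_left ha.le)
  have hpos : 0 < a ^ ((3:ℝ)/8) * b ^ ((5:ℝ)/8) :=
    mul_pos (Real.rpow_pos_of_pos ha _) (Real.rpow_pos_of_pos hb _)
  calc (a+b)⁻¹ ≤ (a ^ ((3:ℝ)/8) * b ^ ((5:ℝ)/8))⁻¹ := by
        exact inv_anti₀ hpos key
    _ = a ^ (-(3/8):ℝ) * b ^ (-(5/8):ℝ) := by
        rw [mul_inv, ← Real.rpow_neg ha.le, ← Real.rpow_neg hb.le]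

private lemma lint_Icc_even {ε : ℝ} (g : ℝ → ℝ≥0∞)
    (heven : ∀ x, g (-x) = g x) :
    ∫⁻ x in Icc (-ε) ε, g x ≤ 2 * ∫⁻ x in Icc 0 ε, g x := by
  have hsub : Icc (-ε) ε ⊆ Icc (-ε) 0 ∪ Icc 0 ε := by
    intro x hx
    rcases le_total x 0 with h | h
    · exact Or.inl ⟨hx.1, h⟩
    · exact Or.inr ⟨h, hx.2⟩
  have hneg : ∫⁻ x in Icc (-ε) 0, g x = ∫⁻ x in Icc 0 ε, g x := by
    have hmp := (Measure.measurePreserving_neg (volume : Measure ℝ)).lintegral_comp_emb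
      (Homeomorph.neg ℝ).measurableEmbedding ((Icc (-ε) 0).indicator g)
    have hpt : ∀ x : ℝ, (Icc (-ε) 0).indicator g (-x) = (Icc 0 ε).indicator g x := by
      intro x
      by_cases hx : x ∈ Icc (0:ℝ) ε
      · rw [indicator_of_mem hx,
          indicator_of_mem (show -x ∈ Icc (-ε) 0 by
            exact ⟨by linarith [hx.2], by linarith [hx.1]⟩), heven]
      · rw [indicator_of_notMem hx, indicator_of_notMem]
        intro hmem
        exact hx ⟨by linarith [hmem.2], by linarith [hmem.1]⟩
    have e1 : ∫⁻ x in Icc (-ε) 0, g x = ∫⁻ x, (Icc (-ε) 0).indicator g x :=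
      (lintegral_indicator measurableSet_Icc g).symm
    have e2 : ∫⁻ x in Icc 0 ε, g x = ∫⁻ x, (Icc 0 ε).indicator g x :=
      (lintegral_indicator measurableSet_Icc g).symm
    rw [e1, e2, ← hmp]
    exact lintegral_congr fun x => hpt x
  calc ∫⁻ x in Icc (-ε) ε, g x
      ≤ ∫⁻ x in Icc (-ε) 0 ∪ Icc 0 ε, g x := lintegral_mono_set hsub
    _ ≤ (∫⁻ x in Icc (-ε) 0, g x) + ∫⁻ x in Icc 0 ε, g x := lintegral_union_le _ _ _
    _ = 2 * ∫⁻ x in Icc 0 ε, g x := by rw [hneg, two_mul]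

private lemma K_lt_top {ε : ℝ} (hε : 0 < ε) :
    ∫⁻ h₀ in Icc (-ε) ε, ENNReal.ofReal ((h₀ ^ 2 : ℝ) ^ (-(3/8) : ℝ)) < ⊤ := by
  have heven : ∀ x : ℝ, ENNReal.ofReal (((-x) ^ 2 : ℝ) ^ (-(3/8) : ℝ))
      = ENNReal.ofReal ((x ^ 2 : ℝ) ^ (-(3/8) : ℝ)) := by
    intro x; rw [neg_pow]; norm_num
  refine lt_of_le_of_lt (lint_Icc_even _ heven) ?_
  have h1 : ∫⁻ x in Icc (0:ℝ) ε, ENNReal.ofReal ((x ^ 2 : ℝ) ^ (-(3/8) : ℝ))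
      = ∫⁻ x in Ioc (0:ℝ) ε, ENNReal.ofReal ((x ^ 2 : ℝ) ^ (-(3/8) : ℝ)) :=
    (setLIntegral_congr Ioc_ae_eq_Icc).symm
  have h2 : ∫⁻ x in Ioc (0:ℝ) ε, ENNReal.ofReal ((x ^ 2 : ℝ) ^ (-(3/8) : ℝ))
      = ∫⁻ x in Ioc (0:ℝ) ε, ENNReal.ofReal (x ^ (-(3/4) : ℝ)) := by
    refine setLIntegral_congr_fun measurableSet_Ioc ?_
    intro x hx
    beta_reduce
    congr 1
    rw [← Real.rpow_natCast x 2, ← Real.rpow_mul hx.1.le]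
    norm_num
  have h3 : IntegrableOn (fun x : ℝ => x ^ (-(3/4) : ℝ)) (Ioc 0 ε) := by
    refine ((intervalIntegral.integrableOn_Ioo_rpow_iff (show (0:ℝ) < ε + 1 by linarith)).2
      (by norm_num)).mono_set ?_
    exact fun x hx => ⟨hx.1, by linarith [hx.2]⟩
  have h4 := lint_lt_top_of_integrableOn h3
  rw [h1, h2]
  exact ENNReal.mul_lt_top (by norm_num) h4

private lemma sqrt_pow_eq_rpow {x : ℝ} (hx : 0 ≤ x) (d : ℕ) :
    Real.sqrt x ^ d = x ^ ((d:ℝ)/2) := by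
  rw [← Real.rpow_natCast (Real.sqrt x) d, Real.sqrt_eq_rpow, ← Real.rpow_mul hx]
  ring_nf

private lemma L_lt_top {d : ℕ} (hd : 3 ≤ d) {ε : ℝ} (hε : 0 < ε) :
    ∫⁻ x in ball (0 : EuclideanSpace ℝ (Fin d)) ε,
      ENNReal.ofReal (‖x‖ ^ (-(5/2) : ℝ)) < ⊤ := by
  haveI : Nonempty (Fin d) := Fin.pos_iff_nonempty.mp (by omega)
  haveI : Nontrivial (EuclideanSpace ℝ (Fin d)) := inferInstance
  set E := EuclideanSpace ℝ (Fin d)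
  set B := volume (ball (0:E) 1) with hB
  set A : ℕ → Set E := fun n => ball (0:E) (ε * 2⁻¹ ^ n) \ ball (0:E) (ε * 2⁻¹ ^ (n+1))
    with hA
  set q₀ : ℝ := (2⁻¹ : ℝ) ^ ((d:ℝ) - 5/2) with hq₀
  set C : ℝ := (ε/2) ^ (-(5/2):ℝ) * ε ^ d with hC
  have hq₀nn : 0 ≤ q₀ := Real.rpow_nonneg (by norm_num) _
  have hcover : ball (0:E) ε \ {0} ⊆ ⋃ n, A n := by
    intro x hx
    obtain ⟨hxball, hx0⟩ := hx
    have hxpos : 0 < ‖x‖ := norm_pos_iff.mpr hx0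
    have hxlt : ‖x‖ < ε := mem_ball_zero_iff.mp hxball
    have hex : ∃ n : ℕ, ε * 2⁻¹ ^ (n+1) ≤ ‖x‖ := by
      obtain ⟨m, hm⟩ := exists_pow_lt_of_lt_one (div_pos hxpos hε)
        (show (2⁻¹:ℝ) < 1 by norm_num)
      refine ⟨m, ?_⟩
      have hle : (2⁻¹:ℝ) ^ (m+1) ≤ (2⁻¹:ℝ) ^ m :=
        pow_le_pow_of_le_one (by norm_num) (by norm_num) (Nat.le_succ m)
      have := (lt_div_iff₀ hε).mp hm
      calc ε * 2⁻¹ ^ (m+1) ≤ ε * 2⁻¹ ^ m := by nlinarith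
        _ ≤ ‖x‖ := by nlinarith
    classical
    refine mem_iUnion.mpr ⟨Nat.find hex, ?_, ?_⟩
    · rw [mem_ball_zero_iff]
      rcases Nat.eq_zero_or_pos (Nat.find hex) with h0 | hposn
      · rw [h0]; simpa using hxlt
      · have hlt : Nat.find hex - 1 < Nat.find hex := by omega
        have hmin := Nat.find_min hex hlt
        push_neg at hmin
        have hrw : Nat.find hex - 1 + 1 = Nat.find hex := by omega
        rw [hrw] at hmin
        exact hmin
    · rw [mem_ball_zero_iff]
      exact not_lt.mpr (Nat.find_spec hex)
  have hterm : ∀ n : ℕ, (∫⁻ x in A n, ENNReal.ofReal (‖x‖ ^ (-(5/2):ℝ)))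
      ≤ (ENNReal.ofReal C * B) * ENNReal.ofReal q₀ ^ n := by
    intro n
    have hr1 : 0 < ε * 2⁻¹ ^ (n+1) := by positivity
    calc ∫⁻ x in A n, ENNReal.ofReal (‖x‖ ^ (-(5/2):ℝ))
        ≤ ∫⁻ _ in A n, ENNReal.ofReal ((ε * 2⁻¹ ^ (n+1)) ^ (-(5/2):ℝ)) := by
          refine setLIntegral_mono measurable_const fun x hx => ?_
          refine ENNReal.ofReal_le_ofReal ?_
          refine Real.rpow_le_rpow_of_nonpos hr1 ?_ (by norm_num)
          have := hx.2
          rw [mem_ball_zero_iff, not_lt] at this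
          exact this
      _ = ENNReal.ofReal ((ε * 2⁻¹ ^ (n+1)) ^ (-(5/2):ℝ)) * volume (A n) :=
          setLIntegral_const _ _
      _ ≤ ENNReal.ofReal ((ε * 2⁻¹ ^ (n+1)) ^ (-(5/2):ℝ))
            * (ENNReal.ofReal ((ε * 2⁻¹ ^ n) ^ d) * B) := by
          gcongr
          calc volume (A n) ≤ volume (ball (0:E) (ε * 2⁻¹ ^ n)) :=
                measure_mono diff_subset
            _ = ENNReal.ofReal ((ε * 2⁻¹ ^ n) ^ Module.finrank ℝ E) * B :=
                Measure.addHaar_ball _ _ (by positivity)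
            _ = ENNReal.ofReal ((ε * 2⁻¹ ^ n) ^ d) * B := by
                rw [show Module.finrank ℝ E = d from finrank_euclideanSpace_fin]
      _ = (ENNReal.ofReal C * B) * ENNReal.ofReal q₀ ^ n := by
          have hy : (0:ℝ) < (2⁻¹:ℝ) ^ n := by positivity
          have hab : ((ε * 2⁻¹ ^ (n+1) : ℝ) ^ (-(5/2):ℝ)) * ((ε * 2⁻¹ ^ n) ^ d)
              = C * q₀ ^ n := by
            have e1 : (ε * 2⁻¹ ^ (n+1) : ℝ) = (ε/2) * 2⁻¹ ^ n := by ring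
            have e2 : ((2⁻¹:ℝ) ^ n) ^ (-(5/2):ℝ) * ((2⁻¹:ℝ) ^ n) ^ (d:ℕ) = q₀ ^ n := by
              rw [← Real.rpow_natCast ((2⁻¹:ℝ) ^ n) d, ← Real.rpow_add hy,
                ← Real.rpow_natCast (2⁻¹:ℝ) n,
                ← Real.rpow_mul (by norm_num : (0:ℝ) ≤ 2⁻¹), hq₀,
                ← Real.rpow_natCast ((2⁻¹:ℝ) ^ ((d:ℝ) - 5/2)) n,
                ← Real.rpow_mul (by norm_num : (0:ℝ) ≤ 2⁻¹)]
              congr 1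
              ring
            rw [e1, Real.mul_rpow (by positivity) hy.le, mul_pow, hC]
            calc (ε/2) ^ (-(5/2):ℝ) * ((2⁻¹:ℝ) ^ n) ^ (-(5/2):ℝ)
                  * (ε ^ d * ((2⁻¹:ℝ) ^ n) ^ d)
                = ((ε/2) ^ (-(5/2):ℝ) * ε ^ d)
                  * (((2⁻¹:ℝ) ^ n) ^ (-(5/2):ℝ) * ((2⁻¹:ℝ) ^ n) ^ (d:ℕ)) := by ring
              _ = (ε/2) ^ (-(5/2):ℝ) * ε ^ d * q₀ ^ n := by rw [e2]
          have hCnn : (0:ℝ) ≤ C := by rw [hC]; positivity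
          calc ENNReal.ofReal ((ε * 2⁻¹ ^ (n+1)) ^ (-(5/2):ℝ))
                * (ENNReal.ofReal ((ε * 2⁻¹ ^ n) ^ d) * B)
              = ENNReal.ofReal (((ε * 2⁻¹ ^ (n+1)) ^ (-(5/2):ℝ))
                  * ((ε * 2⁻¹ ^ n) ^ d)) * B := by
                rw [← mul_assoc, ← ENNReal.ofReal_mul (Real.rpow_nonneg hr1.le _)]
            _ = ENNReal.ofReal (C * q₀ ^ n) * B := by rw [hab]
            _ = (ENNReal.ofReal C * B) * ENNReal.ofReal q₀ ^ n := by
                rw [ENNReal.ofReal_mul hCnn, ENNReal.ofReal_pow hq₀nn]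
                ring
  have hq : ENNReal.ofReal q₀ < 1 := by
    rw [ENNReal.ofReal_lt_one, hq₀]
    refine Real.rpow_lt_one (by norm_num) (by norm_num) ?_
    have : (3:ℝ) ≤ (d:ℝ) := by exact_mod_cast hd
    linarith
  have h00 : volume (ball (0:E) ε ∩ {(0:E)}) = 0 :=
    measure_mono_null Set.inter_subset_right (measure_singleton (0:E))
  have hzero := (diff_ae_eq_self (μ := volume) (s := ball (0:E) ε)
    (t := ({0} : Set E))).mpr h00
  calc ∫⁻ x in ball (0:E) ε, ENNReal.ofReal (‖x‖ ^ (-(5/2):ℝ))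
      = ∫⁻ x in ball (0:E) ε \ {0}, ENNReal.ofReal (‖x‖ ^ (-(5/2):ℝ)) :=
        (setLIntegral_congr hzero).symm
    _ ≤ ∫⁻ x in ⋃ n, A n, ENNReal.ofReal (‖x‖ ^ (-(5/2):ℝ)) := lintegral_mono_set hcover
    _ ≤ ∑' n, ∫⁻ x in A n, ENNReal.ofReal (‖x‖ ^ (-(5/2):ℝ)) := lintegral_iUnion_le _ _
    _ ≤ ∑' n, (ENNReal.ofReal C * B) * ENNReal.ofReal q₀ ^ n := ENNReal.tsum_le_tsum hterm
    _ = (ENNReal.ofReal C * B) * ∑' n, ENNReal.ofReal q₀ ^ n := ENNReal.tsum_mul_left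
    _ = (ENNReal.ofReal C * B) * (1 - ENNReal.ofReal q₀)⁻¹ := by
        rw [ENNReal.tsum_geometric]
    _ < ⊤ := by
        refine ENNReal.mul_lt_top (ENNReal.mul_lt_top ENNReal.ofReal_lt_top
          measure_ball_lt_top) ?_
        rw [ENNReal.inv_lt_top]
        exact tsub_pos_iff_lt.mpr hq

/-- The "bubble condition" integral: for all sufficiently small `ε > 0`,
`∫_{‖h'‖<ε} ∫_{|h₀|≤ε} (h₀² + ‖h'‖⁴)⁻¹ dh₀ dh'` is infinite when `d = 1, 2`
and finite when `d ≥ 3`. -/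
theorem bubble_integral_dichotomy (d : ℕ) (hd : 1 ≤ d) :
    ∃ ε₀ : ℝ, 0 < ε₀ ∧ ∀ ε : ℝ, 0 < ε → ε ≤ ε₀ →
      (((d = 1 ∨ d = 2) →
        (∫⁻ h' in Metric.ball (0 : EuclideanSpace ℝ (Fin d)) ε,
          ∫⁻ h₀ in Set.Icc (-ε) ε,
            ENNReal.ofReal ((h₀ ^ 2 + ‖h'‖ ^ 4)⁻¹)) = ⊤) ∧
      (3 ≤ d →
        (∫⁻ h' in Metric.ball (0 : EuclideanSpace ℝ (Fin d)) ε,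
          ∫⁻ h₀ in Set.Icc (-ε) ε,
            ENNReal.ofReal ((h₀ ^ 2 + ‖h'‖ ^ 4)⁻¹)) ≠ ⊤)) := by
  haveI : Nonempty (Fin d) := Fin.pos_iff_nonempty.mp hd
  haveI : Nontrivial (EuclideanSpace ℝ (Fin d)) := inferInstance
  refine ⟨1, one_pos, fun ε hε hε1 => ⟨?_, ?_⟩⟩
  · -- divergence for d = 1, 2
    intro hd12
    have hmeas : Measurable (Function.uncurry fun (h' : EuclideanSpace ℝ (Fin d)) (h₀ : ℝ) =>
        ENNReal.ofReal ((h₀ ^ 2 + ‖h'‖ ^ 4)⁻¹)) := by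
      apply Measurable.ennreal_ofReal
      fun_prop
    rw [lintegral_lintegral_swap hmeas.aemeasurable]
    rw [eq_top_iff]
    have hsub : Ioo (0:ℝ) (ε^2) ⊆ Icc (-ε) ε := by
      intro x hx
      constructor
      · linarith [hx.1]
      · nlinarith [hx.2]
    have hεsq : 0 < ε ^ 2 := by positivity
    have hlow : ∀ h₀ ∈ Ioo (0:ℝ) (ε^2),
        ENNReal.ofReal (h₀ ^ ((d:ℝ)/2 - 2) * (1/2))
            * volume (ball (0 : EuclideanSpace ℝ (Fin d)) 1)
          ≤ ∫⁻ h' in ball (0 : EuclideanSpace ℝ (Fin d)) ε,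
              ENNReal.ofReal ((h₀ ^ 2 + ‖h'‖ ^ 4)⁻¹) := by
      intro h₀ hh₀
      have h₀pos := hh₀.1
      have hsqrt_lt : Real.sqrt h₀ < ε := by
        rw [show ε = Real.sqrt (ε^2) by rw [Real.sqrt_sq hε.le]]
        exact Real.sqrt_lt_sqrt h₀pos.le hh₀.2
      have hid : h₀ ^ ((d:ℝ)/2 - 2) * (1/2) = (2 * h₀ ^ 2)⁻¹ * Real.sqrt h₀ ^ d := by
        rw [sqrt_pow_eq_rpow h₀pos.le]
        have hexp : ((d:ℝ)/2 - 2) = (d:ℝ)/2 + (-(((2:ℕ):ℝ))) := by push_cast; ring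
        rw [hexp, Real.rpow_add h₀pos, Real.rpow_neg h₀pos.le, Real.rpow_natCast]
        rw [mul_inv]
        ring
      calc ENNReal.ofReal (h₀ ^ ((d:ℝ)/2 - 2) * (1/2))
            * volume (ball (0 : EuclideanSpace ℝ (Fin d)) 1)
          = ENNReal.ofReal ((2 * h₀ ^ 2)⁻¹)
              * volume (ball (0 : EuclideanSpace ℝ (Fin d)) (Real.sqrt h₀)) := by
            rw [Measure.addHaar_ball _ _ (Real.sqrt_nonneg _),
              show Module.finrank ℝ (EuclideanSpace ℝ (Fin d)) = d from
                finrank_euclideanSpace_fin, ← mul_assoc,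
              ← ENNReal.ofReal_mul (by positivity), ← hid]
        _ = ∫⁻ _ in ball (0 : EuclideanSpace ℝ (Fin d)) (Real.sqrt h₀),
              ENNReal.ofReal ((2 * h₀ ^ 2)⁻¹) := (setLIntegral_const _ _).symm
        _ ≤ ∫⁻ h' in ball (0 : EuclideanSpace ℝ (Fin d)) (Real.sqrt h₀),
              ENNReal.ofReal ((h₀ ^ 2 + ‖h'‖ ^ 4)⁻¹) := by
            refine setLIntegral_mono (by fun_prop) fun x hx => ?_
            refine ENNReal.ofReal_le_ofReal ?_
            have hx' : ‖x‖ < Real.sqrt h₀ := mem_ball_zero_iff.mp hx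
            have hxsq : ‖x‖ ^ 2 ≤ h₀ := by
              nlinarith [norm_nonneg x, Real.sq_sqrt h₀pos.le, Real.sqrt_nonneg h₀]
            have hle : h₀ ^ 2 + ‖x‖ ^ 4 ≤ 2 * h₀ ^ 2 := by nlinarith [norm_nonneg x]
            exact inv_anti₀ (by positivity) hle
        _ ≤ ∫⁻ h' in ball (0 : EuclideanSpace ℝ (Fin d)) ε,
              ENNReal.ofReal ((h₀ ^ 2 + ‖h'‖ ^ 4)⁻¹) :=
            lintegral_mono_set (ball_subset_ball hsqrt_lt.le)
    have htop : ∫⁻ h₀ in Ioo (0:ℝ) (ε^2),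
        ENNReal.ofReal (h₀ ^ ((d:ℝ)/2 - 2) * (1/2))
          * volume (ball (0 : EuclideanSpace ℝ (Fin d)) 1) = ⊤ := by
      rw [lintegral_mul_const _ (by fun_prop)]
      refine ENNReal.mul_eq_top.mpr (Or.inr ⟨?_, ?_⟩)
      · have hsplit : ∀ x : ℝ, ENNReal.ofReal (x ^ ((d:ℝ)/2 - 2) * (1/2))
            = ENNReal.ofReal (x ^ ((d:ℝ)/2 - 2)) * ENNReal.ofReal (1/2) := fun x =>
          ENNReal.ofReal_mul' (by norm_num)
        simp only [hsplit]
        rw [lintegral_mul_const _ (by fun_prop)]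
        have hs : (d:ℝ)/2 - 2 ≤ -1 := by
          rcases hd12 with h | h <;> rw [h] <;> norm_num
        rw [lint_rpow_Ioo_top hs hεsq]
        rw [ENNReal.top_mul (by norm_num)]
      · exact (measure_ball_pos _ _ one_pos).ne'
    have hGmeas : Measurable fun h₀ : ℝ =>
        ∫⁻ h' in ball (0 : EuclideanSpace ℝ (Fin d)) ε,
          ENNReal.ofReal ((h₀ ^ 2 + ‖h'‖ ^ 4)⁻¹) :=
      Measurable.lintegral_prod_left hmeas
    calc (⊤:ℝ≥0∞) = ∫⁻ h₀ in Ioo (0:ℝ) (ε^2),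
          ENNReal.ofReal (h₀ ^ ((d:ℝ)/2 - 2) * (1/2))
            * volume (ball (0 : EuclideanSpace ℝ (Fin d)) 1) := htop.symm
      _ ≤ ∫⁻ h₀ in Ioo (0:ℝ) (ε^2),
            ∫⁻ h' in ball (0 : EuclideanSpace ℝ (Fin d)) ε,
              ENNReal.ofReal ((h₀ ^ 2 + ‖h'‖ ^ 4)⁻¹) :=
          setLIntegral_mono hGmeas hlow
      _ ≤ ∫⁻ h₀ in Icc (-ε) ε,
            ∫⁻ h' in ball (0 : EuclideanSpace ℝ (Fin d)) ε,
              ENNReal.ofReal ((h₀ ^ 2 + ‖h'‖ ^ 4)⁻¹) := lintegral_mono_set hsub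
  · -- convergence for d ≥ 3
    intro hd3
    have hK := K_lt_top hε
    have hL := L_lt_top hd3 hε
    have h0ae : ∀ᵐ x : EuclideanSpace ℝ (Fin d) ∂volume, x ≠ 0 := by
      rw [ae_iff]
      simp only [ne_eq, not_not, setOf_eq_eq_singleton]
      exact measure_singleton 0
    have hinner : ∀ h' : EuclideanSpace ℝ (Fin d), h' ≠ 0 →
        (∫⁻ h₀ in Icc (-ε) ε, ENNReal.ofReal ((h₀ ^ 2 + ‖h'‖ ^ 4)⁻¹))
          ≤ (∫⁻ h₀ in Icc (-ε) ε, ENNReal.ofReal ((h₀ ^ 2 : ℝ) ^ (-(3/8):ℝ)))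
              * ENNReal.ofReal (‖h'‖ ^ (-(5/2):ℝ)) := by
      intro h' hh'
      have hr : 0 < ‖h'‖ := norm_pos_iff.mpr hh'
      rw [← lintegral_mul_const _ (by fun_prop)]
      refine setLIntegral_mono_ae (by fun_prop) ?_
      have h0ae' : ∀ᵐ x : ℝ ∂volume, x ≠ 0 := by
        rw [ae_iff]
        simp only [ne_eq, not_not, setOf_eq_eq_singleton]
        exact measure_singleton 0
      filter_upwards [h0ae'] with h₀ h₀ne _
      have hbound := inv_add_le_rpow (a := h₀ ^ 2) (b := ‖h'‖ ^ 4)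
        (by positivity) (by positivity)
      have h4 : ((‖h'‖ ^ 4 : ℝ)) ^ (-(5/8):ℝ) = ‖h'‖ ^ (-(5/2):ℝ) := by
        rw [← Real.rpow_natCast ‖h'‖ 4, ← Real.rpow_mul (norm_nonneg _)]
        norm_num
      calc ENNReal.ofReal ((h₀ ^ 2 + ‖h'‖ ^ 4)⁻¹)
          ≤ ENNReal.ofReal ((h₀ ^ 2 : ℝ) ^ (-(3/8):ℝ) * ‖h'‖ ^ (-(5/2):ℝ)) := by
            rw [← h4]
            exact ENNReal.ofReal_le_ofReal hbound
        _ = ENNReal.ofReal ((h₀ ^ 2 : ℝ) ^ (-(3/8):ℝ))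
              * ENNReal.ofReal (‖h'‖ ^ (-(5/2):ℝ)) :=
            ENNReal.ofReal_mul (Real.rpow_nonneg (by positivity) _)
    refine lt_top_iff_ne_top.mp ?_
    calc ∫⁻ h' in ball (0 : EuclideanSpace ℝ (Fin d)) ε,
          ∫⁻ h₀ in Icc (-ε) ε, ENNReal.ofReal ((h₀ ^ 2 + ‖h'‖ ^ 4)⁻¹)
        ≤ ∫⁻ h' in ball (0 : EuclideanSpace ℝ (Fin d)) ε,
            (∫⁻ h₀ in Icc (-ε) ε, ENNReal.ofReal ((h₀ ^ 2 : ℝ) ^ (-(3/8):ℝ)))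
              * ENNReal.ofReal (‖h'‖ ^ (-(5/2):ℝ)) := by
          refine setLIntegral_mono_ae (by fun_prop) ?_
          filter_upwards [h0ae] with h' hh' _
          exact hinner h' hh'
      _ = (∫⁻ h₀ in Icc (-ε) ε, ENNReal.ofReal ((h₀ ^ 2 : ℝ) ^ (-(3/8):ℝ)))
            * ∫⁻ h' in ball (0 : EuclideanSpace ℝ (Fin d)) ε,
                ENNReal.ofReal (‖h'‖ ^ (-(5/2):ℝ)) :=
          lintegral_const_mul _ (by fun_prop)
      _ < ⊤ := ENNReal.mul_lt_top hK hL
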